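/- arXiv:0905.0829 — 6 statements merged into one kernel-verified Lean document; each statement's English description precedes it below -/
import Mathlib

section
/- Let α > 0 and β > 0. Then there exists a unique real number K with K > α + β satisfying β · ∑_{n=1}^∞ 1/(K n² − α) = 1. -/
open scoped BigOperators

lemma summable_pnat_sq : Summable (fun n : ℕ+ => 1 / ((n : ℕ) : ℝ) ^ 2) := by
  have h : Summable (fun n : ℕ => 1 / (n : ℝ) ^ 2) :=
    Real.summable_one_div_nat_pow.mpr one_lt_two
  exact h.comp_injective PNat.coe_injective

lemma pnat_sq_ge_one (n : ℕ+) : (1 : ℝ) ≤ ((n : ℕ) : ℝ) ^ 2 := by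
  have h1 : (1 : ℝ) ≤ ((n : ℕ) : ℝ) := by exact_mod_cast n.one_le
  nlinarith

lemma denom_lower {α K : ℝ} (hα : 0 ≤ α) (n : ℕ+) :
    (K - α) * ((n : ℕ) : ℝ) ^ 2 ≤ K * ((n : ℕ) : ℝ) ^ 2 - α := by
  have h := pnat_sq_ge_one n
  nlinarith

lemma denom_pos {α K : ℝ} (hα : 0 ≤ α) (hK : α < K) (n : ℕ+) :
    0 < K * ((n : ℕ) : ℝ) ^ 2 - α := by
  have h := pnat_sq_ge_one n
  have h2 := denom_lower (K := K) hα n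
  nlinarith

lemma summable_aux {α K : ℝ} (hα : 0 ≤ α) (hK : α < K) :
    Summable (fun n : ℕ+ => 1 / (K * ((n : ℕ) : ℝ) ^ 2 - α)) := by
  have hb : Summable (fun n : ℕ+ => (K - α)⁻¹ * (1 / ((n : ℕ) : ℝ) ^ 2)) :=
    summable_pnat_sq.mul_left _
  refine Summable.of_nonneg_of_le (fun n => le_of_lt ?_) (fun n => ?_) hb
  · exact one_div_pos.mpr (denom_pos hα hK n)
  · have hpos : 0 < (K - α) * ((n : ℕ) : ℝ) ^ 2 := by
      have h := pnat_sq_ge_one n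
      nlinarith
    have := one_div_le_one_div_of_le hpos (denom_lower (K := K) hα n)
    calc 1 / (K * ((n : ℕ) : ℝ) ^ 2 - α) ≤ 1 / ((K - α) * ((n : ℕ) : ℝ) ^ 2) := this
      _ = (K - α)⁻¹ * (1 / ((n : ℕ) : ℝ) ^ 2) := by
          rw [one_div, mul_inv, one_div, inv_eq_one_div, one_div]

lemma tsum_anti {α K₁ K₂ : ℝ} (hα : 0 ≤ α) (h1 : α < K₁) (h12 : K₁ < K₂) :
    (∑' n : ℕ+, 1 / (K₂ * ((n : ℕ) : ℝ) ^ 2 - α)) <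
      ∑' n : ℕ+, 1 / (K₁ * ((n : ℕ) : ℝ) ^ 2 - α) := by
  have h2 : α < K₂ := h1.trans h12
  refine Summable.tsum_lt_tsum (i := 1) (fun n => ?_) ?_ (summable_aux hα h2) (summable_aux hα h1)
  · apply one_div_le_one_div_of_le (denom_pos hα h1 n)
    have h := pnat_sq_ge_one n
    nlinarith
  · apply one_div_lt_one_div_of_lt (denom_pos hα h1 1)
    simp only [PNat.one_coe, Nat.cast_one, one_pow, mul_one]
    linarith

theorem stmt_0 (α β : ℝ) (hα : 0 < α) (hβ : 0 < β) :
    ∃! K : ℝ, K > α + β ∧ β * ∑' n : ℕ+, 1 / (K * ((n : ℕ) : ℝ) ^ 2 - α) = 1 := by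
  set S : ℝ := ∑' n : ℕ+, 1 / ((n : ℕ) : ℝ) ^ 2 with hS
  have hSnn : ∀ n : ℕ+, 0 ≤ 1 / ((n : ℕ) : ℝ) ^ 2 := fun n => by positivity
  have hS1 : (1 : ℝ) ≤ S := by
    calc (1 : ℝ) = 1 / (((1 : ℕ+) : ℕ) : ℝ) ^ 2 := by norm_num
      _ ≤ S := Summable.le_tsum summable_pnat_sq 1 (fun j _ => hSnn j)
  set f : ℝ → ℝ := fun K => β * ∑' n : ℕ+, 1 / (K * ((n : ℕ) : ℝ) ^ 2 - α) with hf
  set a : ℝ := α + β with ha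
  set b : ℝ := α + β * S + β with hb
  have hαa : α < a := by simp [ha]; linarith
  have hab : a < b := by
    have : 0 < β * S := by nlinarith
    simp only [ha, hb]; linarith
  -- f a > 1
  have hfa : 1 < f a := by
    have hsum := summable_aux (le_of_lt hα) hαa
    have hterm1 : 1 / (a * ((1 : ℕ+) : ℕ) ^ 2 - α) = 1 / β := by
      norm_num [ha]
    have hlt : 1 / β < ∑' n : ℕ+, 1 / (a * ((n : ℕ) : ℝ) ^ 2 - α) := by
      have h2 : (0 : ℝ) < 1 / (a * ((2 : ℕ+) : ℕ) ^ 2 - α) :=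
        one_div_pos.mpr (denom_pos (le_of_lt hα) hαa 2)
      have hsub : ∑ n ∈ ({1, 2} : Finset ℕ+), 1 / (a * ((n : ℕ) : ℝ) ^ 2 - α) ≤
          ∑' n : ℕ+, 1 / (a * ((n : ℕ) : ℝ) ^ 2 - α) := by
        apply Summable.sum_le_tsum
        · exact fun n _ => le_of_lt (one_div_pos.mpr (denom_pos (le_of_lt hα) hαa n))
        · exact hsum
      have hfin : ∑ n ∈ ({1, 2} : Finset ℕ+), 1 / (a * ((n : ℕ) : ℝ) ^ 2 - α) =
          1 / β + 1 / (a * ((2 : ℕ+) : ℕ) ^ 2 - α) := by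
        rw [Finset.sum_insert (by decide), Finset.sum_singleton]
        push_cast
        rw [show (a * (1:ℝ)^2 - α) = β by rw [ha]; ring]
      linarith [hsub, hfin ▸ hsub]
    calc (1 : ℝ) = β * (1 / β) := by field_simp
      _ < f a := by
        apply mul_lt_mul_of_pos_left hlt hβ
  -- f b < 1
  have hfb : f b < 1 := by
    have hαb : α < b := hαa.trans hab
    have hsum := summable_aux (le_of_lt hα) hαb
    have hbd : Summable (fun n : ℕ+ => (b - α)⁻¹ * (1 / ((n : ℕ) : ℝ) ^ 2)) :=
      summable_pnat_sq.mul_left _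
    have hle : ∑' n : ℕ+, 1 / (b * ((n : ℕ) : ℝ) ^ 2 - α) ≤ (b - α)⁻¹ * S := by
      have := Summable.tsum_le_tsum (f := fun n : ℕ+ => 1 / (b * ((n : ℕ) : ℝ) ^ 2 - α))
        (g := fun n : ℕ+ => (b - α)⁻¹ * (1 / ((n : ℕ) : ℝ) ^ 2)) ?_ hsum hbd
      · rw [tsum_mul_left] at this; exact this
      · intro n
        have hpos : 0 < (b - α) * ((n : ℕ) : ℝ) ^ 2 := by
          have h := pnat_sq_ge_one n; nlinarith
        have h1 := one_div_le_one_div_of_le hpos (denom_lower (K := b) (le_of_lt hα) n)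
        calc 1 / (b * ((n : ℕ) : ℝ) ^ 2 - α) ≤ 1 / ((b - α) * ((n : ℕ) : ℝ) ^ 2) := h1
          _ = (b - α)⁻¹ * (1 / ((n : ℕ) : ℝ) ^ 2) := by
            rw [one_div, mul_inv, one_div, inv_eq_one_div, one_div]
    have hba : b - α = β * (S + 1) := by simp [hb]; ring
    calc f b ≤ β * ((b - α)⁻¹ * S) := by
          apply mul_le_mul_of_nonneg_left hle (le_of_lt hβ)
      _ = S / (S + 1) := by
          rw [hba]; field_simp
      _ < 1 := by
          rw [div_lt_one (by linarith)]; linarith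
  -- continuity on Icc a b
  have hcont : ContinuousOn f (Set.Icc a b) := by
    rw [continuousOn_iff_continuous_restrict]
    apply Continuous.mul continuous_const
    have hkey : ∀ (K : Set.Icc a b) (n : ℕ+),
        β * ((n : ℕ) : ℝ) ^ 2 ≤ (K : ℝ) * ((n : ℕ) : ℝ) ^ 2 - α := by
      intro K n
      have hKa : a ≤ (K : ℝ) := K.2.1
      have h := pnat_sq_ge_one n
      have : (α + β) * ((n : ℕ) : ℝ) ^ 2 ≤ (K : ℝ) * ((n : ℕ) : ℝ) ^ 2 := by
        apply mul_le_mul_of_nonneg_right _ (by nlinarith)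
        simpa [ha] using hKa
      nlinarith
    apply continuous_tsum (f := fun (n : ℕ+) (K : Set.Icc a b) =>
        1 / ((K : ℝ) * ((n : ℕ) : ℝ) ^ 2 - α))
      (u := fun n : ℕ+ => β⁻¹ * (1 / ((n : ℕ) : ℝ) ^ 2))
    · intro n
      apply Continuous.div continuous_const
      · exact (continuous_subtype_val.mul continuous_const).sub continuous_const
      · intro K
        have := hkey K n
        have h := pnat_sq_ge_one n
        nlinarith
    · exact summable_pnat_sq.mul_left _
    · intro n K
      have hpos : 0 < (K : ℝ) * ((n : ℕ) : ℝ) ^ 2 - α := by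
        have := hkey K n
        have h := pnat_sq_ge_one n
        nlinarith
      rw [Real.norm_eq_abs, abs_of_pos (one_div_pos.mpr hpos)]
      have hb2 : 0 < β * ((n : ℕ) : ℝ) ^ 2 := by
        have h := pnat_sq_ge_one n; nlinarith
      calc 1 / ((K : ℝ) * ((n : ℕ) : ℝ) ^ 2 - α)
          ≤ 1 / (β * ((n : ℕ) : ℝ) ^ 2) := one_div_le_one_div_of_le hb2 (hkey K n)
        _ = β⁻¹ * (1 / ((n : ℕ) : ℝ) ^ 2) := by
            rw [one_div, mul_inv, one_div, inv_eq_one_div, one_div]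
  -- IVT
  have hmem : (1 : ℝ) ∈ Set.Icc (f b) (f a) := ⟨le_of_lt hfb, le_of_lt hfa⟩
  obtain ⟨K, hKmem, hKeq⟩ := intermediate_value_Icc' (le_of_lt hab) hcont hmem
  have hKa : a < K := by
    rcases lt_or_eq_of_le hKmem.1 with h | h
    · exact h
    · exfalso; rw [← h] at hKeq; rw [hKeq] at hfa; exact lt_irrefl 1 hfa
  refine ⟨K, ⟨by simpa [ha] using hKa, hKeq⟩, ?_⟩
  rintro K' ⟨hK'a, hK'eq⟩
  have hK'a' : a < K' := by simpa [ha] using hK'a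
  by_contra hne
  rcases lt_or_gt_of_ne hne with h | h
  · have := tsum_anti (le_of_lt hα) (hαa.trans hK'a') h
    have hlt : f K < f K' := mul_lt_mul_of_pos_left this hβ
    have hK'eq' : f K' = 1 := hK'eq
    rw [hKeq, hK'eq'] at hlt; exact lt_irrefl 1 hlt
  · have := tsum_anti (le_of_lt hα) (hαa.trans hKa) h
    have hlt : f K' < f K := mul_lt_mul_of_pos_left this hβ
    have hK'eq' : f K' = 1 := hK'eq
    rw [hKeq, hK'eq'] at hlt; exact lt_irrefl 1 hlt
end

section
/- Let α > 0, β > 0, and let K > α + β be the unique solution of β · ∑_{n=1}^∞ 1/(K n² − α) = 1. Then for every square-summable real sequence (x_n)_{n≥1}, one has α · ∑_{n=1}^∞ x_n²/n² + β · (∑_{n=1}^∞ x_n/n)² ≤ K · ∑_{n=1}^∞ x_n². -/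
theorem stmt_1 (α β K : ℝ) (hα : 0 < α) (hβ : 0 < β) (hK : K > α + β)
    (hKeq : β * ∑' n : ℕ+, 1 / (K * ((n : ℕ) : ℝ) ^ 2 - α) = 1)
    (x : ℕ+ → ℝ) (hx : Summable fun n : ℕ+ => (x n) ^ 2) :
    α * ∑' n : ℕ+, (x n) ^ 2 / ((n : ℕ) : ℝ) ^ 2
      + β * (∑' n : ℕ+, x n / ((n : ℕ) : ℝ)) ^ 2
      ≤ K * ∑' n : ℕ+, (x n) ^ 2 := by
  have hn1 : ∀ n : ℕ+, (1 : ℝ) ≤ ((n : ℕ) : ℝ) := fun n => by exact_mod_cast n.one_le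
  have hn0 : ∀ n : ℕ+, ((n : ℕ) : ℝ) ≠ 0 := fun n => by have := hn1 n; linarith
  have hc : ∀ n : ℕ+, 0 < K * ((n : ℕ) : ℝ) ^ 2 - α := by
    intro n
    have h1 := hn1 n
    have h2 : (1 : ℝ) ≤ ((n : ℕ) : ℝ) ^ 2 := by nlinarith
    nlinarith [mul_le_mul_of_nonneg_left h2 (show (0:ℝ) ≤ K by linarith)]
  set c : ℕ+ → ℝ := fun n => K * ((n : ℕ) : ℝ) ^ 2 - α with hcdef
  have hKeq' : β * ∑' n : ℕ+, 1 / c n = 1 := by simp only [hcdef]; exact hKeq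
  have hgsum : Summable (fun n : ℕ+ => 1 / c n) := by
    by_contra h
    rw [tsum_eq_zero_of_not_summable h, mul_zero] at hKeq'
    exact one_ne_zero hKeq'.symm
  set a : ℕ+ → ℝ := fun n => x n * Real.sqrt (c n) / ((n : ℕ) : ℝ) with hadef
  have ha2 : ∀ n : ℕ+, a n ^ 2 = K * x n ^ 2 - α * (x n ^ 2 / ((n : ℕ) : ℝ) ^ 2) := by
    intro n
    have hs : Real.sqrt (c n) ^ 2 = c n := Real.sq_sqrt (hc n).le
    have h0 := hn0 n
    simp only [hadef]
    field_simp [hadef, mul_pow, div_pow, hs, hcdef]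
    rw [hs]; simp only [hcdef]; ring
  have hTsum : Summable (fun n : ℕ+ => x n ^ 2 / ((n : ℕ) : ℝ) ^ 2) := by
    apply Summable.of_nonneg_of_le (fun n => by positivity) (fun n => ?_) hx
    have := hn1 n
    exact div_le_self (sq_nonneg _) (by nlinarith)
  have hAsum : Summable (fun n : ℕ+ => a n ^ 2) := by
    have : (fun n : ℕ+ => a n ^ 2)
        = fun n => K * x n ^ 2 - α * (x n ^ 2 / ((n : ℕ) : ℝ) ^ 2) := funext ha2
    rw [this]
    exact (hx.mul_left K).sub (hTsum.mul_left α)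
  have hA : ∑' n, a n ^ 2
      = K * (∑' n : ℕ+, x n ^ 2) - α * (∑' n : ℕ+, x n ^ 2 / ((n : ℕ) : ℝ) ^ 2) := by
    rw [tsum_congr ha2, Summable.tsum_sub (hx.mul_left K) (hTsum.mul_left α),
      tsum_mul_left, tsum_mul_left]
  have hag : ∀ n : ℕ+, a n * (1 / Real.sqrt (c n)) = x n / ((n : ℕ) : ℝ) := by
    intro n
    have hs : Real.sqrt (c n) ≠ 0 := Real.sqrt_ne_zero'.mpr (hc n)
    simp only [hadef]
    field_simp [hadef]
  have hg2 : ∀ n : ℕ+, (1 / Real.sqrt (c n)) ^ 2 = 1 / c n := by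
    intro n
    rw [div_pow, one_pow, Real.sq_sqrt (hc n).le]
  have hxnsum : Summable (fun n : ℕ+ => x n / ((n : ℕ) : ℝ)) := by
    apply Summable.of_abs
    apply Summable.of_nonneg_of_le (fun n => abs_nonneg _)
      (fun n => ?_) (((hAsum.add hgsum).mul_left (1/2)))
    rw [← hag n, abs_mul]
    have h1 : |(1 : ℝ) / Real.sqrt (c n)| = 1 / Real.sqrt (c n) := abs_of_nonneg (by positivity)
    rw [h1]
    nlinarith [sq_nonneg (|a n| - 1 / Real.sqrt (c n)), sq_abs (a n), hg2 n,
      Real.sqrt_nonneg (c n), abs_nonneg (a n)]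
  have hB : ∑' n : ℕ+, 1 / c n = 1 / β := by
    rw [eq_div_iff hβ.ne']
    linarith [hKeq']
  -- Cauchy-Schwarz for the tsum
  have hCS : (∑' n : ℕ+, x n / ((n : ℕ) : ℝ)) ^ 2 ≤ (∑' n, a n ^ 2) * (1 / β) := by
    have hLt : Filter.Tendsto
        (fun s : Finset ℕ+ => (∑ i ∈ s, x i / ((i : ℕ) : ℝ)) ^ 2) Filter.atTop
        (nhds ((∑' n : ℕ+, x n / ((n : ℕ) : ℝ)) ^ 2)) :=
      Filter.Tendsto.pow hxnsum.hasSum 2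
    refine le_of_tendsto hLt (Filter.Eventually.of_forall fun s => ?_)
    have hcs : (∑ i ∈ s, x i / ((i : ℕ) : ℝ)) ^ 2
        ≤ (∑ i ∈ s, a i ^ 2) * (∑ i ∈ s, (1 / Real.sqrt (c i)) ^ 2) := by
      have := Finset.sum_mul_sq_le_sq_mul_sq s a (fun i => 1 / Real.sqrt (c i))
      calc (∑ i ∈ s, x i / ((i : ℕ) : ℝ)) ^ 2
          = (∑ i ∈ s, a i * (1 / Real.sqrt (c i))) ^ 2 := by
            rw [Finset.sum_congr rfl (fun i _ => (hag i).symm)]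
        _ ≤ _ := this
    refine hcs.trans (mul_le_mul ?_ ?_ ?_ ?_)
    · exact Summable.sum_le_tsum s (fun i _ => sq_nonneg _) hAsum
    · rw [← hB]
      calc ∑ i ∈ s, (1 / Real.sqrt (c i)) ^ 2 = ∑ i ∈ s, 1 / c i :=
            Finset.sum_congr rfl (fun i _ => hg2 i)
        _ ≤ _ := Summable.sum_le_tsum s (fun i _ => (one_div_pos.mpr (hc i)).le) hgsum
    · exact Finset.sum_nonneg (fun i _ => sq_nonneg _)
    · exact tsum_nonneg (fun n => sq_nonneg _)
  have hfin : β * (∑' n : ℕ+, x n / ((n : ℕ) : ℝ)) ^ 2 ≤ ∑' n, a n ^ 2 := by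
    calc β * (∑' n : ℕ+, x n / ((n : ℕ) : ℝ)) ^ 2
        ≤ β * ((∑' n, a n ^ 2) * (1 / β)) := by
          exact mul_le_mul_of_nonneg_left hCS hβ.le
      _ = ∑' n, a n ^ 2 := by
        rw [mul_comm β, mul_assoc, one_div_mul_cancel hβ.ne', mul_one]
  linarith [hfin, hA]
end

section
/- Let α > 0, β > 0, and let K > α + β satisfy β · ∑_{n=1}^∞ 1/(K n² − α) = 1. Equality α ∑ x_n²/n² + β (∑ x_n/n)² = K ∑ x_n² holds for a square-summable sequence (x_n) if and only if there exists C ∈ ℝ such that x_n = C/(K n − α/n) for all n ≥ 1. -/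
theorem stmt_2 (α β K : ℝ) (hα : 0 < α) (hβ : 0 < β) (hK : K > α + β)
    (hKeq : β * ∑' n : ℕ+, 1 / (K * ((n : ℕ) : ℝ) ^ 2 - α) = 1)
    (x : ℕ+ → ℝ) (hx : Summable fun n : ℕ+ => (x n) ^ 2) :
    α * ∑' n : ℕ+, (x n) ^ 2 / ((n : ℕ) : ℝ) ^ 2
      + β * (∑' n : ℕ+, x n / ((n : ℕ) : ℝ)) ^ 2
      = K * ∑' n : ℕ+, (x n) ^ 2
    ↔ ∃ C : ℝ, ∀ n : ℕ+, x n = C / (K * ((n : ℕ) : ℝ) - α / ((n : ℕ) : ℝ)) := by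
  -- basic facts about the coercion
  have hN1 : ∀ n : ℕ+, (1 : ℝ) ≤ ((n : ℕ) : ℝ) := fun n => by
    exact_mod_cast n.one_le
  have hNpos : ∀ n : ℕ+, (0 : ℝ) < ((n : ℕ) : ℝ) := fun n => lt_of_lt_of_le one_pos (hN1 n)
  -- w n := K n² - α is positive
  have hwge : ∀ n : ℕ+, β * ((n : ℕ) : ℝ) ^ 2 ≤ K * ((n : ℕ) : ℝ) ^ 2 - α := fun n => by
    have h1 := hN1 n
    have hn2 : (1 : ℝ) ≤ ((n : ℕ) : ℝ) ^ 2 := by nlinarith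
    have c1 : (0 : ℝ) ≤ (K - α - β) * ((n : ℕ) : ℝ) ^ 2 := by nlinarith
    nlinarith
  have hwpos : ∀ n : ℕ+, (0 : ℝ) < K * ((n : ℕ) : ℝ) ^ 2 - α := fun n => by
    have := hwge n
    nlinarith [hNpos n]
  -- summability of 1/n²
  have hNsq : Summable (fun n : ℕ+ => 1 / ((n : ℕ) : ℝ) ^ 2) := by
    have h0 : Summable (fun n : ℕ => 1 / (n : ℝ) ^ 2) :=
      Real.summable_one_div_nat_pow.mpr one_lt_two
    exact h0.comp_injective (fun a b h => PNat.coe_injective h)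
  -- summability of 1/(K n² - α)
  have hsum_w : Summable (fun n : ℕ+ => 1 / (K * ((n : ℕ) : ℝ) ^ 2 - α)) := by
    apply Summable.of_nonneg_of_le (fun n => le_of_lt (one_div_pos.mpr (hwpos n)))
      (fun n => ?_) (hNsq.mul_left (1 / β))
    have h1 : 0 < β * ((n : ℕ) : ℝ) ^ 2 := by positivity
    have h2 := hwge n
    calc 1 / (K * ((n : ℕ) : ℝ) ^ 2 - α) ≤ 1 / (β * ((n : ℕ) : ℝ) ^ 2) :=
          one_div_le_one_div_of_le h1 h2
      _ = 1 / β * (1 / ((n : ℕ) : ℝ) ^ 2) := by rw [one_div_mul_one_div]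
  -- summability of x²/n²
  have hx2N : Summable (fun n : ℕ+ => (x n) ^ 2 / ((n : ℕ) : ℝ) ^ 2) := by
    apply Summable.of_nonneg_of_le (fun n => by positivity) (fun n => ?_) hx
    exact div_le_self (sq_nonneg _) (by nlinarith [hN1 n])
  -- summability of x/n
  have hxN : Summable (fun n : ℕ+ => x n / ((n : ℕ) : ℝ)) := by
    apply Summable.of_abs
    apply Summable.of_nonneg_of_le (fun n => abs_nonneg _) (fun n => ?_)
      ((hx.add hNsq).div_const 2)
    have h1 := hNpos n
    have h2 := sq_nonneg (|x n| - 1 / ((n : ℕ) : ℝ))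
    have h3 : |x n / ((n : ℕ) : ℝ)| = |x n| * (1 / ((n : ℕ) : ℝ)) := by
      rw [abs_div, abs_of_pos h1]; ring
    have h4 : |x n| ^ 2 = x n ^ 2 := sq_abs _
    have h5 : (1 / ((n : ℕ) : ℝ)) ^ 2 = 1 / ((n : ℕ) : ℝ) ^ 2 := by
      rw [div_pow, one_pow]
    rw [h3]
    nlinarith [abs_nonneg (x n), h2, h4, h5]
  set T1 : ℝ := ∑' n : ℕ+, (x n) ^ 2 with hT1
  set T2 : ℝ := ∑' n : ℕ+, (x n) ^ 2 / ((n : ℕ) : ℝ) ^ 2 with hT2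
  set S : ℝ := ∑' n : ℕ+, x n / ((n : ℕ) : ℝ) with hS
  set W : ℝ := ∑' n : ℕ+, 1 / (K * ((n : ℕ) : ℝ) ^ 2 - α) with hWdef
  have hW : W = 1 / β := by
    field_simp
    linarith [hKeq]
  -- the quadratic remainder term
  set t : ℕ+ → ℝ := fun n =>
    (K * (x n) ^ 2 - α * ((x n) ^ 2 / ((n : ℕ) : ℝ) ^ 2))
      - (2 * β * S) * (x n / ((n : ℕ) : ℝ))
      + (β ^ 2 * S ^ 2) * (1 / (K * ((n : ℕ) : ℝ) ^ 2 - α)) with ht_def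
  have h1s : Summable (fun n : ℕ+ => K * (x n) ^ 2 - α * ((x n) ^ 2 / ((n : ℕ) : ℝ) ^ 2)) :=
    (hx.mul_left K).sub (hx2N.mul_left α)
  have h2s : Summable (fun n : ℕ+ => (2 * β * S) * (x n / ((n : ℕ) : ℝ))) := hxN.mul_left _
  have h3s : Summable (fun n : ℕ+ => (β ^ 2 * S ^ 2) * (1 / (K * ((n : ℕ) : ℝ) ^ 2 - α))) :=
    hsum_w.mul_left _
  have ht : Summable t := (h1s.sub h2s).add h3s
  -- value of the sum of t
  have hts : ∑' n, t n = K * T1 - α * T2 - β * S ^ 2 := by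
    rw [ht_def]
    rw [Summable.tsum_add (h1s.sub h2s) h3s, Summable.tsum_sub h1s h2s,
      Summable.tsum_sub (hx.mul_left K) (hx2N.mul_left α),
      tsum_mul_left, tsum_mul_left, tsum_mul_left, tsum_mul_left]
    rw [← hT1, ← hT2, ← hS, ← hWdef, hW]
    field_simp
    ring
  -- t n as a square
  have htn : ∀ n : ℕ+, t n = (K * ((n : ℕ) : ℝ) ^ 2 - α)
      * (x n / ((n : ℕ) : ℝ) - β * S / (K * ((n : ℕ) : ℝ) ^ 2 - α)) ^ 2 := by
    intro n
    have hw := hwpos n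
    have hn := hNpos n
    have hw' : K * ((n : ℕ) : ℝ) ^ 2 - α ≠ 0 := ne_of_gt hw
    have hn' : ((n : ℕ) : ℝ) ≠ 0 := ne_of_gt hn
    rw [ht_def]
    field_simp
    ring
  have htnn : ∀ n : ℕ+, 0 ≤ t n := fun n => by
    rw [htn n]; exact mul_nonneg (le_of_lt (hwpos n)) (sq_nonneg _)
  constructor
  · -- forward
    intro heq
    have htz : ∑' n, t n = 0 := by rw [hts]; linarith
    have hall : ∀ n, t n = 0 := by
      intro n
      by_contra hne
      have hpos : 0 < t n := lt_of_le_of_ne (htnn n) (Ne.symm hne)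
      have := Summable.tsum_pos ht htnn n hpos
      linarith
    refine ⟨β * S, fun n => ?_⟩
    have h0 := hall n
    rw [htn n] at h0
    have hg : x n / ((n : ℕ) : ℝ) - β * S / (K * ((n : ℕ) : ℝ) ^ 2 - α) = 0 := by
      rcases mul_eq_zero.mp h0 with h | h
      · exact absurd h (ne_of_gt (hwpos n))
      · exact (pow_eq_zero_iff (by norm_num : (2:ℕ) ≠ 0)).mp h
    have hn := hNpos n
    have hw := hwpos n
    have hd : 0 < K * ((n : ℕ) : ℝ) - α / ((n : ℕ) : ℝ) := by
      rw [sub_pos, div_lt_iff₀ hn]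
      nlinarith [hwpos n]
    rw [eq_div_iff (ne_of_gt hd)]
    have hg2 : x n * (K * ((n : ℕ) : ℝ) ^ 2 - α) = β * S * ((n : ℕ) : ℝ) := by
      field_simp at hg
      rw [mul_zero, sub_eq_zero, eq_div_iff (by nlinarith)] at hg
      linarith
    have hne : ((n : ℕ) : ℝ) ≠ 0 := ne_of_gt hn
    have hrw : K * ((n : ℕ) : ℝ) - α / ((n : ℕ) : ℝ)
        = (K * ((n : ℕ) : ℝ) ^ 2 - α) / ((n : ℕ) : ℝ) := by
      field_simp
    rw [hrw]
    field_simp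
    linear_combination hg2
  · -- backward
    rintro ⟨C, hC⟩
    have hxn : ∀ n : ℕ+, x n / ((n : ℕ) : ℝ) = C / (K * ((n : ℕ) : ℝ) ^ 2 - α) := by
      intro n
      have hn := hNpos n
      have hw := hwpos n
      rw [hC n, div_div]
      congr 1
      field_simp
    have hSval : S = C * W := by
      rw [hS]
      calc (∑' n : ℕ+, x n / ((n : ℕ) : ℝ))
          = ∑' n : ℕ+, C * (1 / (K * ((n : ℕ) : ℝ) ^ 2 - α)) := by
            refine tsum_congr fun n => ?_
            rw [hxn n]; ring
        _ = C * W := by rw [tsum_mul_left]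
    have hβS : β * S = C := by rw [hSval, hW]; field_simp
    have hall : ∀ n, t n = 0 := by
      intro n
      rw [htn n]
      have : x n / ((n : ℕ) : ℝ) - β * S / (K * ((n : ℕ) : ℝ) ^ 2 - α) = 0 := by
        rw [hxn n, hβS]; ring
      rw [this]
      ring
    have htz : ∑' n, t n = 0 := by
      rw [tsum_congr hall]; exact tsum_zero
    rw [hts] at htz
    linarith
end

section
/- Let α > 0, β > 0, and K̃ > 2(α+β) satisfy 2β ∑_{n=1}^∞ 1/(K̃ n² − 2α) = 1. Then equality in α ∑ (x_n+y_n)²/n² + β (∑ (x_n+y_n)/n)² ≤ K̃ (∑ x_n² + ∑ y_n²) holds if and only if there exists C ∈ ℝ with x_n = y_n = C/(K̃ n − 2α/n) for all n ≥ 1. -/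
set_option maxHeartbeats 1000000 in
theorem stmt_4 (α β Kt : ℝ) (hα : 0 < α) (hβ : 0 < β) (hKt : Kt > 2 * (α + β))
    (hKeq : 2 * β * ∑' n : ℕ+, 1 / (Kt * ((n : ℕ) : ℝ) ^ 2 - 2 * α) = 1)
    (x y : ℕ+ → ℝ) (hx : Summable fun n : ℕ+ => (x n) ^ 2)
    (hy : Summable fun n : ℕ+ => (y n) ^ 2) :
    α * ∑' n : ℕ+, (x n + y n) ^ 2 / ((n : ℕ) : ℝ) ^ 2
      + β * (∑' n : ℕ+, (x n + y n) / ((n : ℕ) : ℝ)) ^ 2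
      = Kt * ((∑' n : ℕ+, (x n) ^ 2) + ∑' n : ℕ+, (y n) ^ 2)
    ↔ ∃ C : ℝ, ∀ n : ℕ+,
        x n = C / (Kt * ((n : ℕ) : ℝ) - 2 * α / ((n : ℕ) : ℝ)) ∧
        y n = C / (Kt * ((n : ℕ) : ℝ) - 2 * α / ((n : ℕ) : ℝ)) := by
  -- basic positivity
  have hN : ∀ n : ℕ+, (0:ℝ) < ((n : ℕ) : ℝ) := fun n => by exact_mod_cast n.pos
  have hN1 : ∀ n : ℕ+, (1:ℝ) ≤ ((n : ℕ) : ℝ) := fun n => by exact_mod_cast n.one_le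
  have hKα : 2 * α < Kt := by linarith
  have hKt0 : 0 < Kt := by linarith
  have hN2 : ∀ n : ℕ+, (1:ℝ) ≤ ((n : ℕ) : ℝ) ^ 2 := fun n => by nlinarith [hN1 n]
  have hd : ∀ n : ℕ+, 0 < Kt * ((n : ℕ) : ℝ) ^ 2 - 2 * α := by
    intro n
    have := hN2 n
    nlinarith
  have hdne : ∀ n : ℕ+, Kt * ((n : ℕ) : ℝ) ^ 2 - 2 * α ≠ 0 := fun n => ne_of_gt (hd n)
  have hNne : ∀ n : ℕ+, ((n : ℕ) : ℝ) ≠ 0 := fun n => ne_of_gt (hN n)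
  have hβne : β ≠ 0 := ne_of_gt hβ
  -- denominator in the statement is positive
  have hD : ∀ n : ℕ+, 0 < Kt * ((n : ℕ) : ℝ) - 2 * α / ((n : ℕ) : ℝ) := by
    intro n
    have h : Kt * ((n : ℕ) : ℝ) - 2 * α / ((n : ℕ) : ℝ)
        = (Kt * ((n : ℕ) : ℝ) ^ 2 - 2 * α) / ((n : ℕ) : ℝ) := by
      field_simp
    rw [h]
    exact div_pos (hd n) (hN n)
  set w : ℕ+ → ℝ := fun n => 2 / (Kt * ((n : ℕ) : ℝ) ^ 2 - 2 * α) with hw_def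
  -- summability of w
  have hwinv : Summable fun n : ℕ+ => 1 / (Kt * ((n : ℕ) : ℝ) ^ 2 - 2 * α) := by
    by_contra h
    rw [tsum_eq_zero_of_not_summable h] at hKeq
    simp at hKeq
  have hw : Summable w := by
    have h : w = fun n : ℕ+ => 2 * (1 / (Kt * ((n : ℕ) : ℝ) ^ 2 - 2 * α)) := by
      funext n; simp only [hw_def]; ring
    rw [h]
    exact hwinv.mul_left 2
  have hwsum : ∑' n, w n = 1 / β := by
    have h1 : ∑' n : ℕ+, 1 / (Kt * ((n : ℕ) : ℝ) ^ 2 - 2 * α) = 1 / (2 * β) := by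
      field_simp at hKeq ⊢; linarith
    have h2 : ∑' n, w n = 2 * ∑' n : ℕ+, 1 / (Kt * ((n : ℕ) : ℝ) ^ 2 - 2 * α) := by
      rw [← tsum_mul_left]
      congr 1; funext n; simp only [hw_def]; ring
    rw [h2, h1]; field_simp
  have hwpos : ∀ n, 0 < w n := fun n => by
    simp only [hw_def]; exact div_pos two_pos (hd n)
  -- summability of (x+y)^2
  have hb2 : Summable fun n : ℕ+ => 2 * x n ^ 2 + 2 * y n ^ 2 :=
    (hx.mul_left 2).add (hy.mul_left 2)
  have hs2 : Summable fun n : ℕ+ => (x n + y n) ^ 2 := by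
    have hle : ∀ n : ℕ+, (x n + y n) ^ 2 ≤ 2 * x n ^ 2 + 2 * y n ^ 2 := by
      intro n; nlinarith [sq_nonneg (x n - y n)]
    exact Summable.of_nonneg_of_le (fun n => sq_nonneg _) hle hb2
  -- summability of (x+y)^2 / n^2
  have hA : Summable fun n : ℕ+ => (x n + y n) ^ 2 / ((n : ℕ) : ℝ) ^ 2 := by
    have hle : ∀ n : ℕ+, (x n + y n) ^ 2 / ((n : ℕ) : ℝ) ^ 2 ≤ (x n + y n) ^ 2 :=
      fun n => div_le_self (sq_nonneg _) (hN2 n)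
    exact Summable.of_nonneg_of_le (fun n => by positivity) hle hs2
  -- summability of (x+y) / n
  have hsn : Summable fun n : ℕ+ => (x n + y n) / ((n : ℕ) : ℝ) := by
    apply Summable.of_abs
    have hbig : Summable fun n : ℕ+ => ((x n + y n) ^ 2 + Kt * w n) / 2 :=
      (hs2.add (hw.mul_left Kt)).div_const 2
    have hle : ∀ n : ℕ+, |(x n + y n) / ((n : ℕ) : ℝ)|
        ≤ ((x n + y n) ^ 2 + Kt * w n) / 2 := by
      intro n
      have h1 : (1:ℝ) / ((n : ℕ) : ℝ) ^ 2 ≤ Kt * w n := by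
        rw [div_le_iff₀ (by positivity : (0:ℝ) < ((n : ℕ) : ℝ) ^ 2)]
        simp only [hw_def]
        have he : Kt * (2 / (Kt * ((n : ℕ) : ℝ) ^ 2 - 2 * α)) * ((n : ℕ) : ℝ) ^ 2
            = (2 * Kt * ((n : ℕ) : ℝ) ^ 2) / (Kt * ((n : ℕ) : ℝ) ^ 2 - 2 * α) := by
          field_simp
        rw [he, le_div_iff₀ (hd n)]
        have := hN2 n
        nlinarith
      have h2 : |(x n + y n) / ((n : ℕ) : ℝ)|
          ≤ ((x n + y n) ^ 2 + 1 / ((n : ℕ) : ℝ) ^ 2) / 2 := by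
        rw [abs_div, abs_of_pos (hN n), div_le_iff₀ (hN n)]
        have hinv : (1:ℝ) / ((n : ℕ) : ℝ) ^ 2 * ((n : ℕ) : ℝ) ^ 2 = 1 := by
          field_simp
        nlinarith [sq_abs (x n + y n), sq_nonneg (|x n + y n| * ((n : ℕ) : ℝ) - 1),
          hN n, abs_nonneg (x n + y n), sq_nonneg ((n : ℕ) : ℝ)]
      calc |(x n + y n) / ((n : ℕ) : ℝ)|
          ≤ ((x n + y n) ^ 2 + 1 / ((n : ℕ) : ℝ) ^ 2) / 2 := h2
        _ ≤ ((x n + y n) ^ 2 + Kt * w n) / 2 := by linarith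
    exact Summable.of_nonneg_of_le (fun n => abs_nonneg _) hle hbig
  -- constants
  set A := ∑' n : ℕ+, (x n + y n) ^ 2 / ((n : ℕ) : ℝ) ^ 2 with hA_def
  set T := ∑' n : ℕ+, (x n + y n) / ((n : ℕ) : ℝ) with hT_def
  set c := β * T with hc_def
  -- key auxiliary functions
  set u : ℕ+ → ℝ := fun n =>
    (x n + y n) - 2 * c * ((n : ℕ) : ℝ) / (Kt * ((n : ℕ) : ℝ) ^ 2 - 2 * α) with hu_def
  set a : ℕ+ → ℝ := fun n =>
    (Kt * ((n : ℕ) : ℝ) ^ 2 - 2 * α) / (2 * ((n : ℕ) : ℝ) ^ 2) with ha_def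
  have hapos : ∀ n, 0 < a n := fun n => by
    simp only [ha_def]
    exact div_pos (hd n) (by positivity)
  -- pointwise identity
  have hpt : ∀ n : ℕ+, Kt / 2 * (x n - y n) ^ 2 + a n * u n ^ 2
      = Kt * x n ^ 2 + Kt * y n ^ 2 - α * ((x n + y n) ^ 2 / ((n : ℕ) : ℝ) ^ 2)
        - 2 * c * ((x n + y n) / ((n : ℕ) : ℝ)) + c ^ 2 * w n := by
    intro n
    simp only [ha_def, hu_def, hw_def]
    have h1 := hdne n
    have h2 := hNne n
    field_simp
    ring
  -- summability pieces
  have hG : Summable fun n =>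
      Kt * x n ^ 2 + Kt * y n ^ 2 - α * ((x n + y n) ^ 2 / ((n : ℕ) : ℝ) ^ 2)
        - 2 * c * ((x n + y n) / ((n : ℕ) : ℝ)) + c ^ 2 * w n := by
    apply Summable.add _ (hw.mul_left (c ^ 2))
    apply Summable.sub _ (hsn.mul_left (2 * c))
    exact Summable.sub ((hx.mul_left Kt).add (hy.mul_left Kt)) (hA.mul_left α)
  have hP : Summable fun n => Kt / 2 * (x n - y n) ^ 2 := by
    apply Summable.mul_left
    have hle : ∀ n : ℕ+, (x n - y n) ^ 2 ≤ 2 * x n ^ 2 + 2 * y n ^ 2 := by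
      intro n; nlinarith [sq_nonneg (x n + y n)]
    exact Summable.of_nonneg_of_le (fun n => sq_nonneg _) hle hb2
  have hF : Summable fun n => Kt / 2 * (x n - y n) ^ 2 + a n * u n ^ 2 :=
    Summable.congr hG (fun n => (hpt n).symm)
  have hQ : Summable fun n => a n * u n ^ 2 :=
    Summable.congr (hF.sub hP) (fun n => by ring)
  -- value of the total sum
  have hGsum : ∑' n, (Kt / 2 * (x n - y n) ^ 2 + a n * u n ^ 2)
      = Kt * (∑' n : ℕ+, (x n) ^ 2) + Kt * (∑' n : ℕ+, (y n) ^ 2) - α * A - β * T ^ 2 := by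
    rw [tsum_congr hpt]
    rw [Summable.tsum_add (by
        apply Summable.sub _ (hsn.mul_left (2 * c))
        exact Summable.sub ((hx.mul_left Kt).add (hy.mul_left Kt)) (hA.mul_left α))
      (hw.mul_left (c ^ 2))]
    rw [Summable.tsum_sub (Summable.sub ((hx.mul_left Kt).add (hy.mul_left Kt)) (hA.mul_left α))
      (hsn.mul_left (2 * c))]
    rw [Summable.tsum_sub ((hx.mul_left Kt).add (hy.mul_left Kt)) (hA.mul_left α)]
    rw [Summable.tsum_add (hx.mul_left Kt) (hy.mul_left Kt)]
    rw [tsum_mul_left, tsum_mul_left, tsum_mul_left, tsum_mul_left, tsum_mul_left]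
    rw [hwsum, ← hA_def, ← hT_def]
    simp only [hc_def]
    field_simp
    ring
  have hsplit : ∑' n, (Kt / 2 * (x n - y n) ^ 2 + a n * u n ^ 2)
      = (∑' n, Kt / 2 * (x n - y n) ^ 2) + ∑' n, a n * u n ^ 2 := Summable.tsum_add hP hQ
  constructor
  · -- forward direction
    intro hE
    have hzero : (∑' n, Kt / 2 * (x n - y n) ^ 2) + ∑' n, a n * u n ^ 2 = 0 := by
      rw [← hsplit, hGsum]
      linarith
    have hPnn : 0 ≤ ∑' n, Kt / 2 * (x n - y n) ^ 2 :=
      tsum_nonneg (fun n => mul_nonneg (by linarith) (sq_nonneg _))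
    have hQnn : 0 ≤ ∑' n, a n * u n ^ 2 :=
      tsum_nonneg (fun n => mul_nonneg (le_of_lt (hapos n)) (sq_nonneg _))
    have hPz : ∑' n, Kt / 2 * (x n - y n) ^ 2 = 0 := by linarith
    have hQz : ∑' n, a n * u n ^ 2 = 0 := by linarith
    refine ⟨c, fun n => ?_⟩
    have hxy : x n = y n := by
      have h1 : Kt / 2 * (x n - y n) ^ 2 ≤ 0 := by
        rw [← hPz]
        exact Summable.le_tsum hP n (fun j _ => mul_nonneg (by linarith) (sq_nonneg _))
      have h2 : 0 ≤ Kt / 2 * (x n - y n) ^ 2 :=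
        mul_nonneg (by linarith) (sq_nonneg _)
      have h3 : (x n - y n) ^ 2 = 0 := by
        have h4 : Kt / 2 * (x n - y n) ^ 2 = 0 := le_antisymm h1 h2
        have h5 : Kt / 2 ≠ 0 := by positivity
        exact (mul_eq_zero.mp h4).resolve_left h5
      have := pow_eq_zero_iff (n := 2) (by norm_num) |>.mp h3
      linarith
    have hu0 : u n = 0 := by
      have h1 : a n * u n ^ 2 ≤ 0 := by
        rw [← hQz]
        exact Summable.le_tsum hQ n (fun j _ => mul_nonneg (le_of_lt (hapos j)) (sq_nonneg _))
      have h2 : 0 ≤ a n * u n ^ 2 := mul_nonneg (le_of_lt (hapos n)) (sq_nonneg _)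
      have h3 : u n ^ 2 = 0 := by
        have h4 : a n * u n ^ 2 = 0 := le_antisymm h1 h2
        exact (mul_eq_zero.mp h4).resolve_left (ne_of_gt (hapos n))
      exact pow_eq_zero_iff (n := 2) (by norm_num) |>.mp h3
    have hsn' : x n + y n
        = 2 * c * ((n : ℕ) : ℝ) / (Kt * ((n : ℕ) : ℝ) ^ 2 - 2 * α) := by
      have h := hu0
      simp only [hu_def] at h
      linarith
    have hxn : x n = c / (Kt * ((n : ℕ) : ℝ) - 2 * α / ((n : ℕ) : ℝ)) := by
      have hsxy : x n + y n = 2 * x n := by rw [hxy]; ring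
      rw [hsxy] at hsn'
      rw [eq_div_iff (ne_of_gt (hD n))]
      rw [eq_div_iff (hdne n)] at hsn'
      have h2 := hNne n
      field_simp
      linear_combination hsn' / 2
    exact ⟨hxn, hxy ▸ hxn⟩
  · -- backward direction
    rintro ⟨C, hC⟩
    have hsw : ∀ n : ℕ+, (x n + y n) / ((n : ℕ) : ℝ) = C * w n := by
      intro n
      rw [(hC n).1, (hC n).2]
      simp only [hw_def]
      rw [← add_div, div_div, ← mul_div_assoc]
      rw [div_eq_div_iff (by
          have h1 := hD n; have h2 := hN n; positivity) (hdne n)]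
      have h2 := hNne n
      field_simp
      ring
    have hT' : T = C / β := by
      have h : T = ∑' n, C * w n := by
        rw [hT_def]; exact tsum_congr hsw
      rw [h, tsum_mul_left, hwsum]
      field_simp
    have hcC : c = C := by rw [hc_def, hT']; field_simp
    have hu0 : ∀ n, u n = 0 := by
      intro n
      simp only [hu_def]
      have h1 := hsw n
      rw [div_eq_iff (hNne n)] at h1
      simp only [hw_def] at h1
      rw [h1, hcC]
      field_simp
      ring
    have hxyz : ∀ n, x n - y n = 0 := by
      intro n
      rw [(hC n).1, (hC n).2]; ring
    have hzero : ∑' n, (Kt / 2 * (x n - y n) ^ 2 + a n * u n ^ 2) = 0 := by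
      have h : ∀ n : ℕ+, Kt / 2 * (x n - y n) ^ 2 + a n * u n ^ 2 = 0 := by
        intro n; rw [hxyz n, hu0 n]; ring
      rw [tsum_congr h, tsum_zero]
    rw [hGsum] at hzero
    linarith
end

section
/- Let α > 0, β > 0, l ∈ ℕ⁺, and let k_l be the maximum of α ∑_{n=1}^l x_n²/n² + β (∑_{n=1}^l x_n/n)² over all (x_1,…,x_l) ∈ ℝ^l with ∑_{n=1}^l x_n² = 1. Then k_l satisfies β ∑_{n=1}^l 1/(k_l n² − α) = 1, and the maximum is attained exactly at the two points x_n = ± [∑_{m=1}^l (k_l m − α/m)^{-2}]^{-1/2} · 1/(k_l n − α/n), n = 1,…,l. -/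
-- key algebraic identity
lemma key_id (α k : ℝ) (l : ℕ) (hpos : ∀ n ∈ Finset.Icc 1 l, 0 < k*(n:ℝ)^2 - α)
    (x : ℕ → ℝ) (lam : ℝ) :
    ∑ n ∈ Finset.Icc 1 l, (k - α/(n:ℝ)^2) * (x n - lam * ((n:ℝ)/(k*(n:ℝ)^2 - α)))^2
    = k * (∑ n ∈ Finset.Icc 1 l, x n ^2) - α * (∑ n ∈ Finset.Icc 1 l, x n^2/(n:ℝ)^2)
      - 2*lam*(∑ n ∈ Finset.Icc 1 l, x n/(n:ℝ))
      + lam^2 * (∑ n ∈ Finset.Icc 1 l, 1/(k*(n:ℝ)^2 - α)) := by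
  have step : ∑ n ∈ Finset.Icc 1 l, (k - α/(n:ℝ)^2) * (x n - lam * ((n:ℝ)/(k*(n:ℝ)^2 - α)))^2
      = ∑ n ∈ Finset.Icc 1 l, (k * x n ^2 - α * (x n^2/(n:ℝ)^2) - (2*lam)*(x n/(n:ℝ))
        + lam^2 * (1/(k*(n:ℝ)^2 - α))) := by
    refine Finset.sum_congr rfl fun n hn => ?_
    have h1 : 1 ≤ n := (Finset.mem_Icc.mp hn).1
    have hn0 : (n:ℝ) ≠ 0 := by positivity
    have hd : k*(n:ℝ)^2 - α ≠ 0 := ne_of_gt (hpos n hn)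
    field_simp
    ring
  rw [step]
  simp only [Finset.sum_add_distrib, Finset.sum_sub_distrib, ← Finset.mul_sum]

set_option maxHeartbeats 1000000 in
theorem stmt_5 (α β : ℝ) (hα : 0 < α) (hβ : 0 < β) (l : ℕ) (hl : 1 ≤ l) (k : ℝ)
    (hk : IsGreatest
      {v : ℝ | ∃ x : ℕ → ℝ, (∑ n ∈ Finset.Icc 1 l, (x n) ^ 2) = 1 ∧
        v = α * ∑ n ∈ Finset.Icc 1 l, (x n) ^ 2 / (n : ℝ) ^ 2
            + β * (∑ n ∈ Finset.Icc 1 l, x n / (n : ℝ)) ^ 2} k) :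
    β * ∑ n ∈ Finset.Icc 1 l, 1 / (k * (n : ℝ) ^ 2 - α) = 1 ∧
    ∀ x : ℕ → ℝ, (∑ n ∈ Finset.Icc 1 l, (x n) ^ 2) = 1 →
      (α * ∑ n ∈ Finset.Icc 1 l, (x n) ^ 2 / (n : ℝ) ^ 2
          + β * (∑ n ∈ Finset.Icc 1 l, x n / (n : ℝ)) ^ 2 = k
        ↔ (∀ n ∈ Finset.Icc 1 l,
              x n = (Real.sqrt (∑ m ∈ Finset.Icc 1 l, (k * (m : ℝ) - α / (m : ℝ))⁻¹ ^ 2))⁻¹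
                      * (k * (n : ℝ) - α / (n : ℝ))⁻¹)
          ∨ (∀ n ∈ Finset.Icc 1 l,
              x n = -((Real.sqrt (∑ m ∈ Finset.Icc 1 l, (k * (m : ℝ) - α / (m : ℝ))⁻¹ ^ 2))⁻¹
                      * (k * (n : ℝ) - α / (n : ℝ))⁻¹))) := by
  have h1mem : 1 ∈ Finset.Icc 1 l := Finset.mem_Icc.mpr ⟨le_refl 1, hl⟩
  -- a helper to sum indicator-type functions
  have e1 : ∀ f : ℕ → ℝ, ∑ n ∈ Finset.Icc 1 l, (if n = 1 then f n else 0) = f 1 := by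
    intro f
    rw [Finset.sum_eq_single_of_mem 1 h1mem (fun b _ hb => by simp [hb])]
    simp
  -- k ≥ α + β
  have hkαβ : α + β ≤ k := by
    have hmem : α + β ∈ {v : ℝ | ∃ x : ℕ → ℝ, (∑ n ∈ Finset.Icc 1 l, (x n) ^ 2) = 1 ∧
        v = α * ∑ n ∈ Finset.Icc 1 l, (x n) ^ 2 / (n : ℝ) ^ 2
            + β * (∑ n ∈ Finset.Icc 1 l, x n / (n : ℝ)) ^ 2} := by
      refine ⟨fun n => if n = 1 then 1 else 0, ?_, ?_⟩
      · have : ∀ n ∈ Finset.Icc 1 l, (if n = 1 then (1:ℝ) else 0)^2 = (if n = 1 then 1 else 0) := by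
          intro n _; by_cases h : n = 1 <;> simp [h]
        rw [Finset.sum_congr rfl this, e1 (fun _ => 1)]
      · have h2 : ∀ n ∈ Finset.Icc 1 l, (if n = 1 then (1:ℝ) else 0)^2/(n:ℝ)^2
            = (if n = 1 then 1/(n:ℝ)^2 else 0) := by
          intro n _; by_cases h : n = 1 <;> simp [h]
        have h3 : ∀ n ∈ Finset.Icc 1 l, (if n = 1 then (1:ℝ) else 0)/(n:ℝ)
            = (if n = 1 then 1/(n:ℝ) else 0) := by
          intro n _; by_cases h : n = 1 <;> simp [h]
        rw [Finset.sum_congr rfl h2, Finset.sum_congr rfl h3,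
          e1 (fun n => 1/(n:ℝ)^2), e1 (fun n => 1/(n:ℝ))]
        norm_num
    have := hk.2 hmem
    linarith
  have hkα : α < k := by linarith
  have hk0 : 0 < k := by linarith
  have hpos : ∀ n ∈ Finset.Icc 1 l, 0 < k*(n:ℝ)^2 - α := by
    intro n hn
    have h1 : 1 ≤ n := (Finset.mem_Icc.mp hn).1
    have h1r : (1:ℝ) ≤ (n:ℝ) := by exact_mod_cast h1
    have h2 : (1:ℝ) ≤ (n:ℝ)^2 := by nlinarith
    nlinarith [mul_nonneg hk0.le (sub_nonneg.mpr h2)]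
  have hcpos : ∀ n ∈ Finset.Icc 1 l, 0 < k - α/(n:ℝ)^2 := by
    intro n hn
    have h1 : 1 ≤ n := (Finset.mem_Icc.mp hn).1
    have h1r : (1:ℝ) ≤ (n:ℝ) := by exact_mod_cast h1
    have h2 : (1:ℝ) ≤ (n:ℝ)^2 := by nlinarith
    have : α/(n:ℝ)^2 ≤ α := div_le_self hα.le h2
    linarith
  -- shorthand
  set D : ℝ := ∑ n ∈ Finset.Icc 1 l, 1/(k*(n:ℝ)^2 - α) with hD_def
  have hDpos : 0 < D := by
    exact Finset.sum_pos (fun n hn => by simpa using one_div_pos.mpr (hpos n hn)) ⟨1, h1mem⟩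
  set w : ℕ → ℝ := fun n => (n:ℝ)/(k*(n:ℝ)^2 - α) with hw_def
  have hwpos : ∀ n ∈ Finset.Icc 1 l, 0 < w n := by
    intro n hn
    have h1 : 1 ≤ n := (Finset.mem_Icc.mp hn).1
    have h1r : (1:ℝ) ≤ (n:ℝ) := by exact_mod_cast h1
    exact div_pos (by linarith) (hpos n hn)
  set Wsq : ℝ := ∑ n ∈ Finset.Icc 1 l, (w n)^2 with hWsq_def
  have hWpos : 0 < Wsq := Finset.sum_pos (fun n hn => pow_pos (hwpos n hn) 2) ⟨1, h1mem⟩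
  -- ∑ w n / n = D and ∑ (k - α/n²) w n² = D
  have hSw : ∑ n ∈ Finset.Icc 1 l, w n/(n:ℝ) = D := by
    refine Finset.sum_congr rfl fun n hn => ?_
    have h1 : 1 ≤ n := (Finset.mem_Icc.mp hn).1
    have hn0 : (n:ℝ) ≠ 0 := by positivity
    have hd : k*(n:ℝ)^2 - α ≠ 0 := ne_of_gt (hpos n hn)
    simp only [hw_def]
    field_simp
  -- nonnegativity of the quadratic-form sums
  have sum_nonneg' : ∀ (x : ℕ → ℝ) (lam : ℝ),
      0 ≤ ∑ n ∈ Finset.Icc 1 l, (k - α/(n:ℝ)^2) * (x n - lam * w n)^2 := by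
    intro x lam
    exact Finset.sum_nonneg fun n hn => mul_nonneg (hcpos n hn).le (sq_nonneg _)
  have key' : ∀ (x : ℕ → ℝ) (lam : ℝ),
      ∑ n ∈ Finset.Icc 1 l, (k - α/(n:ℝ)^2) * (x n - lam * w n)^2
      = k * (∑ n ∈ Finset.Icc 1 l, x n ^2) - α * (∑ n ∈ Finset.Icc 1 l, x n^2/(n:ℝ)^2)
        - 2*lam*(∑ n ∈ Finset.Icc 1 l, x n/(n:ℝ)) + lam^2 * D :=
    fun x lam => key_id α k l hpos x lam
  have hwinv : ∀ n ∈ Finset.Icc 1 l, (k*(n:ℝ) - α/(n:ℝ))⁻¹ = w n := by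
    intro n hn
    have h1 : 1 ≤ n := (Finset.mem_Icc.mp hn).1
    have hn0 : (n:ℝ) ≠ 0 := Nat.cast_ne_zero.mpr (by omega)
    have heq : k*(n:ℝ) - α/(n:ℝ) = (k*(n:ℝ)^2 - α)/(n:ℝ) := by field_simp
    rw [heq, inv_div]
  -- Step (a): β * D ≤ 1, using the candidate w / √Wsq
  have hβD_le : β * D ≤ 1 := by
    set x : ℕ → ℝ := fun n => w n / Real.sqrt Wsq with hx_def
    have hsq : Real.sqrt Wsq ^ 2 = Wsq := Real.sq_sqrt hWpos.le
    have hxsq : ∑ n ∈ Finset.Icc 1 l, x n ^ 2 = 1 := by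
      simp only [hx_def, div_pow, hsq]
      rw [← Finset.sum_div, ← hWsq_def, div_self hWpos.ne']
    have hle := hk.2 ⟨x, hxsq, rfl⟩
    have hA : ∑ n ∈ Finset.Icc 1 l, x n^2/(n:ℝ)^2
        = (∑ n ∈ Finset.Icc 1 l, w n^2/(n:ℝ)^2)/Wsq := by
      rw [Finset.sum_div]
      refine Finset.sum_congr rfl fun n hn => ?_
      simp only [hx_def]
      rw [div_pow, hsq, div_right_comm]
    have hB : ∑ n ∈ Finset.Icc 1 l, x n/(n:ℝ) = D/Real.sqrt Wsq := by
      rw [← hSw, Finset.sum_div]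
      refine Finset.sum_congr rfl fun n hn => ?_
      simp only [hx_def]
      rw [div_right_comm]
    have hcw : ∑ n ∈ Finset.Icc 1 l, (k - α/(n:ℝ)^2) * (w n - 0 * w n)^2
        = ∑ n ∈ Finset.Icc 1 l, 1/(k*(n:ℝ)^2 - α) := by
      refine Finset.sum_congr rfl fun n hn => ?_
      have h1 : 1 ≤ n := (Finset.mem_Icc.mp hn).1
      have hn0 : (n:ℝ) ≠ 0 := Nat.cast_ne_zero.mpr (by omega)
      have hd : k*(n:ℝ)^2 - α ≠ 0 := ne_of_gt (hpos n hn)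
      simp only [hw_def, zero_mul, sub_zero]
      field_simp
    have hkey0 := key' w 0
    rw [hcw, ← hD_def] at hkey0
    -- hkey0 : D = k*Wsq - α*Bw - 0 + 0
    have hrel : k * Wsq - α * (∑ n ∈ Finset.Icc 1 l, w n^2/(n:ℝ)^2) = D := by
      rw [hWsq_def]; linarith [hkey0]
    rw [hA, hB] at hle
    have hle2 : α * ((∑ n ∈ Finset.Icc 1 l, w n^2/(n:ℝ)^2)/Wsq) + β * (D^2/Wsq) ≤ k := by
      rw [div_pow, hsq] at hle
      linarith [hle]
    have hle3 : α * (∑ n ∈ Finset.Icc 1 l, w n^2/(n:ℝ)^2) + β * D^2 ≤ k * Wsq := by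
      have h2 := mul_le_mul_of_nonneg_right hle2 hWpos.le
      calc α * (∑ n ∈ Finset.Icc 1 l, w n^2/(n:ℝ)^2) + β * D^2
          = (α * ((∑ n ∈ Finset.Icc 1 l, w n^2/(n:ℝ)^2)/Wsq) + β * (D^2/Wsq)) * Wsq := by
            field_simp
        _ ≤ k * Wsq := h2
    nlinarith [hDpos, hle3, hrel]
  -- Step (b): 1 ≤ β * D, using the maximizer
  have hβD_ge : 1 ≤ β * D := by
    obtain ⟨x₀, hx₀, hkeq⟩ := hk.1
    set S₀ : ℝ := ∑ n ∈ Finset.Icc 1 l, x₀ n/(n:ℝ) with hS₀_def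
    set B₀ : ℝ := ∑ n ∈ Finset.Icc 1 l, x₀ n^2/(n:ℝ)^2 with hB₀_def
    have hB₀le : B₀ ≤ 1 := by
      rw [← hx₀, hB₀_def]
      refine Finset.sum_le_sum fun n hn => ?_
      have h1 : 1 ≤ n := (Finset.mem_Icc.mp hn).1
      have h1r : (1:ℝ) ≤ (n:ℝ) := by exact_mod_cast h1
      exact div_le_self (sq_nonneg _) (by nlinarith)
    have hS₀ne : S₀ ≠ 0 := by
      intro h
      rw [h] at hkeq
      simp at hkeq
      nlinarith [hkeq, hB₀le]
    have hS₀sq : 0 < S₀^2 := by positivity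
    have hkey := key' x₀ (S₀/D)
    have hnn := sum_nonneg' x₀ (S₀/D)
    rw [hkey, hx₀, mul_one] at hnn
    have hdiv1 : 2*(S₀/D)*S₀ = 2*(S₀^2/D) := by ring
    have hdiv2 : (S₀/D)^2*D = S₀^2/D := by field_simp
    rw [hdiv1, hdiv2, ← hB₀_def] at hnn
    -- hnn : 0 ≤ k - α*B₀ - 2*S₀²/D + S₀²/D
    have hkval : k = α*B₀ + β*S₀^2 := hkeq
    have hfrac : S₀^2/D ≤ β*S₀^2 := by linarith
    have hmul : S₀^2 ≤ β*S₀^2*D := by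
      have := (div_le_iff₀ hDpos).mp hfrac
      linarith
    have h2 : 1*S₀^2 ≤ (β*D)*S₀^2 := by
      calc 1*S₀^2 = S₀^2 := one_mul _
        _ ≤ β*S₀^2*D := hmul
        _ = (β*D)*S₀^2 := by ring
    exact (mul_le_mul_iff_left₀ hS₀sq).mp h2
  have hβD : β * D = 1 := le_antisymm hβD_le hβD_ge
  refine ⟨hβD, ?_⟩
  clear_value D w Wsq
  intro x hx1
  set S : ℝ := ∑ n ∈ Finset.Icc 1 l, x n/(n:ℝ) with hS_def
  set Bx : ℝ := ∑ n ∈ Finset.Icc 1 l, x n^2/(n:ℝ)^2 with hBx_def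
  clear_value S Bx
  have hE : ∑ m ∈ Finset.Icc 1 l, (k*(m:ℝ) - α/(m:ℝ))⁻¹ ^ 2 = Wsq := by
    rw [hWsq_def]
    exact Finset.sum_congr rfl fun m hm => by rw [hwinv m hm]
  have hh : (β*S)^2 * D = β*S^2 := by linear_combination (β*S^2) * hβD
  have hmain := key' x (β*S)
  rw [hx1, mul_one, ← hBx_def, ← hS_def] at hmain
  constructor
  · intro hQ
    have hzero : ∑ n ∈ Finset.Icc 1 l, (k - α/(n:ℝ)^2) * (x n - (β*S) * w n)^2 = 0 := by
      rw [hmain]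
      linarith [hh, hQ]
    have hterm := (Finset.sum_eq_zero_iff_of_nonneg
      (fun n hn => mul_nonneg (hcpos n hn).le (sq_nonneg _))).mp hzero
    have hxw : ∀ n ∈ Finset.Icc 1 l, x n = (β*S) * w n := by
      intro n hn
      rcases mul_eq_zero.mp (hterm n hn) with hc | hc
      · exact absurd hc (ne_of_gt (hcpos n hn))
      · exact sub_eq_zero.mp ((pow_eq_zero_iff two_ne_zero).mp hc)
    have hnorm : (β*S)^2 * Wsq = 1 := by
      rw [← hx1, hWsq_def, Finset.mul_sum]
      exact Finset.sum_congr rfl fun n hn => by rw [hxw n hn]; ring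
    have hr2 : (β*S)^2 = ((Real.sqrt Wsq)⁻¹)^2 := by
      rw [inv_pow, Real.sq_sqrt hWpos.le, inv_eq_one_div, eq_div_iff hWpos.ne']
      exact hnorm
    rcases sq_eq_sq_iff_eq_or_eq_neg.mp hr2 with hc | hc
    · exact Or.inl fun n hn => by rw [hxw n hn, hE, hwinv n hn, hc]
    · exact Or.inr fun n hn => by rw [hxw n hn, hE, hwinv n hn, hc]; ring
  · intro hOr
    suffices hsuff : ∀ r : ℝ, (∀ n ∈ Finset.Icc 1 l, x n = r * w n) → α*Bx + β*S^2 = k by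
      rcases hOr with hc | hc
      · exact hsuff ((Real.sqrt Wsq)⁻¹) fun n hn => by rw [hc n hn, hE, hwinv n hn]
      · exact hsuff (-(Real.sqrt Wsq)⁻¹) fun n hn => by rw [hc n hn, hE, hwinv n hn]; ring
    intro r hxw
    have hSr : S = r * D := by
      rw [hS_def, ← hSw, Finset.mul_sum]
      exact Finset.sum_congr rfl fun n hn => by rw [hxw n hn]; ring
    have hβS : β*S = r := by rw [hSr]; linear_combination r * hβD
    have hz : ∑ n ∈ Finset.Icc 1 l, (k - α/(n:ℝ)^2) * (x n - (β*S) * w n)^2 = 0 :=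
      Finset.sum_eq_zero fun n hn => by rw [hxw n hn, hβS]; ring
    rw [hz] at hmain
    linarith [hh, hmain]
end

section
/- Let α > 0, β > 0, let k_l be the maximum of α ∑_{n=1}^l x_n²/n² + β (∑_{n=1}^l x_n/n)² on the unit sphere of ℝ^l, and K the unique solution greater than α+β of β ∑_{n=1}^∞ 1/(K n² − α) = 1. Then the sequence (k_l) is nondecreasing and lim_{l→∞} k_l = K. -/
open Finset Filter Topology

theorem aux_ub_stmt6 (α β K : ℝ) (hα : 0 < α) (hβ : 0 < β) (hK : α + β < K) (l : ℕ) (x : ℕ → ℝ)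
    (hx1 : ∑ n ∈ Icc 1 l, (x n) ^ 2 = 1)
    (hs : ∑ n ∈ Icc 1 l, 1 / (K * (n : ℝ) ^ 2 - α) ≤ 1 / β) :
    α * ∑ n ∈ Icc 1 l, (x n) ^ 2 / (n : ℝ) ^ 2
      + β * (∑ n ∈ Icc 1 l, x n / (n : ℝ)) ^ 2 ≤ K := by
  have hpos : ∀ n ∈ Icc 1 l, 0 < K * (n : ℝ) ^ 2 - α := by
    intro n hn
    have h1 : (1:ℝ) ≤ (n:ℝ) := by exact_mod_cast (mem_Icc.1 hn).1
    nlinarith [sq_nonneg ((n:ℝ) - 1), sq_nonneg ((n:ℝ) + 1)]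
  set f := fun n : ℕ => Real.sqrt (K * (n : ℝ) ^ 2 - α) * (x n / n) with hf
  set g := fun n : ℕ => 1 / Real.sqrt (K * (n : ℝ) ^ 2 - α) with hg
  have CS := Finset.sum_mul_sq_le_sq_mul_sq (Icc 1 l) f g
  have e1 : ∑ n ∈ Icc 1 l, f n * g n = ∑ n ∈ Icc 1 l, x n / n := by
    refine Finset.sum_congr rfl fun n hn => ?_
    have ha := hpos n hn
    have hsne : Real.sqrt (K * (n : ℝ) ^ 2 - α) ≠ 0 := by
      rw [Real.sqrt_ne_zero']; exact ha
    calc f n * g n = (x n / n) * (Real.sqrt (K * (n : ℝ) ^ 2 - α)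
          * (1 / Real.sqrt (K * (n : ℝ) ^ 2 - α))) := by rw [hf, hg]; ring
      _ = x n / n := by rw [mul_one_div, div_self hsne, mul_one]
  have e2 : ∑ n ∈ Icc 1 l, f n ^ 2
      = K - α * ∑ n ∈ Icc 1 l, (x n) ^ 2 / (n : ℝ) ^ 2 := by
    have e2' : ∑ n ∈ Icc 1 l, f n ^ 2
        = ∑ n ∈ Icc 1 l, (K * (x n) ^ 2 - α * ((x n) ^ 2 / (n : ℝ) ^ 2)) := by
      refine Finset.sum_congr rfl fun n hn => ?_
      have ha := hpos n hn
      have hn0 : (n:ℝ) ≠ 0 := by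
        have h1 : (1:ℝ) ≤ (n:ℝ) := by exact_mod_cast (mem_Icc.1 hn).1
        linarith
      rw [hf, mul_pow, Real.sq_sqrt ha.le]
      field_simp
    rw [e2', Finset.sum_sub_distrib, ← Finset.mul_sum, ← Finset.mul_sum, hx1, mul_one]
  have e3 : ∑ n ∈ Icc 1 l, g n ^ 2 = ∑ n ∈ Icc 1 l, 1 / (K * (n : ℝ) ^ 2 - α) := by
    refine Finset.sum_congr rfl fun n hn => ?_
    rw [hg, div_pow, one_pow, Real.sq_sqrt (hpos n hn).le]
  rw [e1, e2, e3] at CS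
  set A := ∑ n ∈ Icc 1 l, (x n) ^ 2 / (n : ℝ) ^ 2 with hA
  have hA1 : A ≤ 1 := by
    rw [← hx1, hA]
    refine Finset.sum_le_sum fun n hn => ?_
    have h1 : (1:ℝ) ≤ (n:ℝ) ^ 2 := by
      have : (1:ℝ) ≤ (n:ℝ) := by exact_mod_cast (mem_Icc.1 hn).1
      nlinarith
    exact div_le_self (sq_nonneg _) h1
  have h1 : 0 ≤ K - α * A := by nlinarith
  have h2 : (∑ n ∈ Icc 1 l, x n / (n:ℝ)) ^ 2 ≤ (K - α * A) * (1 / β) :=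
    le_trans CS (mul_le_mul_of_nonneg_left hs h1)
  have h3 : β * (∑ n ∈ Icc 1 l, x n / (n:ℝ)) ^ 2 ≤ K - α * A := by
    have h4 := mul_le_mul_of_nonneg_left h2 hβ.le
    rw [mul_comm (K - α * A) (1/β), ← mul_assoc, mul_one_div, div_self hβ.ne', one_mul] at h4
    exact h4
  linarith

theorem aux_lb_stmt6 (α β K : ℝ) (hα : 0 < α) (hβ : 0 < β) (hK : α + β < K) (l : ℕ)
    (hl : 1 ≤ l) :
    ∃ x : ℕ → ℝ, (∑ n ∈ Icc 1 l, (x n) ^ 2) = 1 ∧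
      α * ∑ n ∈ Icc 1 l, (x n) ^ 2 / (n : ℝ) ^ 2
        + β * (∑ n ∈ Icc 1 l, x n / (n : ℝ)) ^ 2
      = K - (∑ n ∈ Icc 1 l, 1 / (K * (n : ℝ) ^ 2 - α))
          * (1 - β * ∑ n ∈ Icc 1 l, 1 / (K * (n : ℝ) ^ 2 - α))
          / (∑ n ∈ Icc 1 l, ((n : ℝ) / (K * (n : ℝ) ^ 2 - α)) ^ 2) := by
  have hpos : ∀ n ∈ Icc 1 l, 0 < K * (n : ℝ) ^ 2 - α := by
    intro n hn
    have h1 : (1:ℝ) ≤ (n:ℝ) := by exact_mod_cast (mem_Icc.1 hn).1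
    nlinarith [sq_nonneg ((n:ℝ) - 1), sq_nonneg ((n:ℝ) + 1)]
  set xv := fun n : ℕ => (n : ℝ) / (K * (n : ℝ) ^ 2 - α) with hxv
  set N := ∑ n ∈ Icc 1 l, (xv n) ^ 2 with hN
  set s := ∑ n ∈ Icc 1 l, 1 / (K * (n : ℝ) ^ 2 - α) with hs
  have h1mem : (1 : ℕ) ∈ Icc 1 l := mem_Icc.2 ⟨le_refl 1, hl⟩
  have hNpos : 0 < N := by
    refine Finset.sum_pos' (fun i _ => sq_nonneg _) ⟨1, h1mem, ?_⟩
    have h1 := hpos 1 h1mem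
    have : 0 < xv 1 := by
      rw [hxv]; push_cast
      exact div_pos one_pos (by push_cast at h1; linarith)
    positivity
  set T := ∑ n ∈ Icc 1 l, (xv n) ^ 2 / (n : ℝ) ^ 2 with hT
  have hKN : K * N - α * T = s := by
    rw [hN, hT, hs, Finset.mul_sum, Finset.mul_sum, ← Finset.sum_sub_distrib]
    refine Finset.sum_congr rfl fun n hn => ?_
    have ha := hpos n hn
    have hn0 : (n:ℝ) ≠ 0 := by
      have h1 : (1:ℝ) ≤ (n:ℝ) := by exact_mod_cast (mem_Icc.1 hn).1
      linarith
    rw [hxv]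
    field_simp
  have hsv : ∑ n ∈ Icc 1 l, xv n / (n : ℝ) = s := by
    rw [hs]
    refine Finset.sum_congr rfl fun n hn => ?_
    have ha := hpos n hn
    have hn0 : (n:ℝ) ≠ 0 := by
      have h1 : (1:ℝ) ≤ (n:ℝ) := by exact_mod_cast (mem_Icc.1 hn).1
      linarith
    rw [hxv]
    field_simp
  refine ⟨fun n => xv n / Real.sqrt N, ?_, ?_⟩
  · have e : ∀ n ∈ Icc 1 l, (xv n / Real.sqrt N) ^ 2 = (xv n) ^ 2 / N := by
      intro n _; rw [div_pow, Real.sq_sqrt hNpos.le]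
    rw [Finset.sum_congr rfl e, ← Finset.sum_div, ← hN, div_self hNpos.ne']
  · have e1 : ∑ n ∈ Icc 1 l, (xv n / Real.sqrt N) ^ 2 / (n : ℝ) ^ 2 = T / N := by
      rw [hT, Finset.sum_div]
      refine Finset.sum_congr rfl fun n _ => ?_
      rw [div_pow, Real.sq_sqrt hNpos.le, div_div, div_div, mul_comm]
    have e2 : ∑ n ∈ Icc 1 l, (xv n / Real.sqrt N) / (n : ℝ) = s / Real.sqrt N := by
      rw [← hsv, Finset.sum_div]
      refine Finset.sum_congr rfl fun n _ => ?_
      rw [div_right_comm]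
    rw [e1, e2, div_pow, Real.sq_sqrt hNpos.le]
    field_simp
    linear_combination -hKN

theorem stmt_6 (α β : ℝ) (hα : 0 < α) (hβ : 0 < β) (k : ℕ → ℝ)
    (hk : ∀ l : ℕ, 1 ≤ l → IsGreatest
      {v : ℝ | ∃ x : ℕ → ℝ, (∑ n ∈ Finset.Icc 1 l, (x n) ^ 2) = 1 ∧
        v = α * ∑ n ∈ Finset.Icc 1 l, (x n) ^ 2 / (n : ℝ) ^ 2
            + β * (∑ n ∈ Finset.Icc 1 l, x n / (n : ℝ)) ^ 2} (k l))
    (K : ℝ) (hK : K > α + β)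
    (hKeq : β * ∑' n : ℕ+, 1 / (K * ((n : ℕ) : ℝ) ^ 2 - α) = 1) :
    (∀ l : ℕ, 1 ≤ l → k l ≤ k (l + 1)) ∧
    Filter.Tendsto k Filter.atTop (nhds K) := by
  have hK' : α + β < K := hK
  have hKa : α < K := by linarith
  -- the shifted series
  set g := fun i : ℕ => 1 / (K * ((i : ℝ) + 1) ^ 2 - α) with hgdef
  have hsq1 : ∀ i : ℕ, (1:ℝ) ≤ ((i : ℝ) + 1) ^ 2 := by
    intro i; nlinarith [Nat.cast_nonneg (α := ℝ) i, sq_nonneg ((i:ℝ))]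
  have hgpos : ∀ i : ℕ, 0 < K * ((i : ℝ) + 1) ^ 2 - α := by
    intro i; nlinarith [hsq1 i]
  have hgnn : ∀ i : ℕ, 0 ≤ g i := fun i => le_of_lt (one_div_pos.2 (hgpos i))
  have hgsum : Summable g := by
    have hb : Summable (fun i : ℕ => (1 / (K - α)) * (1 / ((i : ℝ) + 1) ^ 2)) := by
      apply Summable.mul_left
      exact_mod_cast (summable_nat_add_iff 1).2 (Real.summable_one_div_nat_pow.2 one_lt_two)
    have hKa' : 0 < K - α := by linarith
    refine Summable.of_nonneg_of_le hgnn (fun i => ?_) hb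
    rw [hgdef, div_mul_div_comm, one_mul]
    apply one_div_le_one_div_of_le (by positivity)
    nlinarith [hsq1 i]
  have htsum : ∑' i, g i = 1 / β := by
    have h1 : (∑' n : ℕ+, 1 / (K * ((n : ℕ) : ℝ) ^ 2 - α)) = ∑' i, g i := by
      rw [← Equiv.pnatEquivNat.symm.tsum_eq (fun n : ℕ+ => 1 / (K * ((n : ℕ) : ℝ) ^ 2 - α))]
      refine tsum_congr fun i => ?_
      have : ((Equiv.pnatEquivNat.symm i : ℕ+) : ℕ) = i + 1 := by
        simp [Equiv.pnatEquivNat, Nat.succPNat]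
      rw [this, hgdef]
      push_cast
      ring_nf
    rw [h1] at hKeq
    field_simp at hKeq ⊢
    linarith
  -- partial sums
  set s := fun l : ℕ => ∑ n ∈ Icc 1 l, 1 / (K * (n : ℝ) ^ 2 - α) with hsdef
  have hs_eq : ∀ l : ℕ, s l = ∑ i ∈ range l, g i := by
    intro l
    show (∑ n ∈ Icc 1 l, 1 / (K * (n : ℝ) ^ 2 - α)) = ∑ i ∈ range l, g i
    rw [← Finset.Ico_add_one_right_eq_Icc, Finset.sum_Ico_eq_sum_range,
      (by omega : l + 1 - 1 = l)]
    refine Finset.sum_congr rfl fun i _ => ?_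
    rw [hgdef]
    push_cast
    ring_nf
  have hs_tend : Tendsto s atTop (𝓝 (1 / β)) := by
    have h := hgsum.hasSum.tendsto_sum_nat
    rw [htsum] at h
    exact h.congr fun l => (hs_eq l).symm
  have hs_le : ∀ l : ℕ, s l ≤ 1 / β := by
    intro l
    rw [hs_eq l, ← htsum]
    exact hgsum.sum_le_tsum (range l) (fun i _ => hgnn i)
  have hs_nn : ∀ l : ℕ, 0 ≤ s l := by
    intro l
    rw [hs_eq l]
    exact Finset.sum_nonneg fun i _ => hgnn i
  -- upper bound
  have hub : ∀ l : ℕ, 1 ≤ l → k l ≤ K := by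
    intro l hl
    obtain ⟨x, hx1, hx2⟩ := (hk l hl).1
    rw [hx2]
    exact aux_ub_stmt6 α β K hα hβ hK' l x hx1 (hs_le l)
  -- lower bound
  set c := (((1:ℕ) : ℝ) / (K * ((1:ℕ) : ℝ) ^ 2 - α)) ^ 2 with hc
  have hcpos : 0 < c := by
    rw [hc]; push_cast
    have h0 : (0:ℝ) < K * 1 ^ 2 - α := by nlinarith
    exact pow_pos (div_pos one_pos h0) 2
  have hcN : ∀ l : ℕ, 1 ≤ l →
      c ≤ ∑ n ∈ Icc 1 l, ((n : ℝ) / (K * (n : ℝ) ^ 2 - α)) ^ 2 := by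
    intro l hl
    exact Finset.single_le_sum (f := fun n : ℕ => ((n : ℝ) / (K * (n : ℝ) ^ 2 - α)) ^ 2)
      (fun i _ => sq_nonneg _) (mem_Icc.2 ⟨le_refl 1, hl⟩)
  have hlb : ∀ l : ℕ, 1 ≤ l → K - (1 / β) * (1 - β * s l) / c ≤ k l := by
    intro l hl
    obtain ⟨x, hx1, hx2⟩ := aux_lb_stmt6 α β K hα hβ hK' l hl
    have h5 := (hk l hl).2 ⟨x, hx1, rfl⟩
    rw [hx2] at h5
    have hb0 : 0 ≤ 1 - β * s l := by
      have := hs_le l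
      have : β * s l ≤ β * (1 / β) := mul_le_mul_of_nonneg_left (hs_le l) hβ.le
      rw [mul_one_div, div_self hβ.ne'] at this
      linarith
    have herr : s l * (1 - β * s l) / (∑ n ∈ Icc 1 l, ((n : ℝ) / (K * (n : ℝ) ^ 2 - α)) ^ 2)
        ≤ (1 / β) * (1 - β * s l) / c := by
      apply div_le_div₀ (by positivity) (mul_le_mul_of_nonneg_right (hs_le l) hb0) hcpos
        (hcN l hl)
    linarith
  -- limit of the lower bound
  have htl : Tendsto (fun l => K - (1 / β) * (1 - β * s l) / c) atTop (𝓝 K) := by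
    have h1 : Tendsto (fun l => β * s l) atTop (𝓝 (β * (1 / β))) := hs_tend.const_mul β
    rw [mul_one_div, div_self hβ.ne'] at h1
    have h2 : Tendsto (fun l => 1 - β * s l) atTop (𝓝 0) := by
      have := h1.const_sub 1
      simpa using this
    have h3 : Tendsto (fun l => (1 / β) * (1 - β * s l) / c) atTop (𝓝 0) := by
      have := (h2.const_mul (1 / β)).div_const c
      simpa using this
    have := h3.const_sub K
    simpa using this
  constructor
  · -- monotonicity
    intro l hl
    obtain ⟨x, hx1, hx2⟩ := (hk l hl).1
    apply (hk (l + 1) (by omega)).2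
    set x' : ℕ → ℝ := fun n => if n ≤ l then x n else 0 with hx'def
    have hx'top : x' (l + 1) = 0 := if_neg (by omega)
    have hx'eq : ∀ n ∈ Icc 1 l, x' n = x n := fun n hn => if_pos (mem_Icc.1 hn).2
    have hsq : ∀ n ∈ Icc 1 l, (x' n) ^ 2 = (x n) ^ 2 := fun n hn => by rw [hx'eq n hn]
    have hdq : ∀ n ∈ Icc 1 l, (x' n) ^ 2 / (n : ℝ) ^ 2 = (x n) ^ 2 / (n : ℝ) ^ 2 :=
      fun n hn => by rw [hx'eq n hn]
    have hdd : ∀ n ∈ Icc 1 l, x' n / (n : ℝ) = x n / (n : ℝ) :=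
      fun n hn => by rw [hx'eq n hn]
    refine ⟨x', ?_, ?_⟩
    · rw [Finset.sum_Icc_succ_top (by omega : 1 ≤ l + 1), hx'top,
        Finset.sum_congr rfl hsq, hx1]
      ring
    · rw [hx2, Finset.sum_Icc_succ_top (by omega : 1 ≤ l + 1),
        Finset.sum_Icc_succ_top (by omega : 1 ≤ l + 1), hx'top,
        Finset.sum_congr rfl hdq, Finset.sum_congr rfl hdd]
      push_cast
      ring
  · exact tendsto_of_tendsto_of_tendsto_of_le_of_le' htl tendsto_const_nhds
      (eventually_atTop.2 ⟨1, hlb⟩) (eventually_atTop.2 ⟨1, hub⟩)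
end
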